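/- Let N ≥ 1 be an integer, let n > 0 be a real number, let R > 0. Let H₀ > 0 and set T := 2R^{n+2}/(n(n+1)H₀). Then there exist no C¹ functions ρ, V : [0,T] × [0,∞) → ℝ such that: (i) ρ(t,r) ≥ 0 for all t, r; (ii) ρ(t,r) = 0 and V(t,r) = 0 whenever r ≥ R (compact support / non-slip boundary condition); (iii) for all t ∈ [0,T] and 0 < r < R the pressureless radial momentum equation with repulsive force holds: ∂ₜV(t,r) + V(t,r)·∂ᵣV(t,r) = α(N)·r^{1−N}·∫₀^r ρ(t,s) s^{N−1} ds; (iv) ∫₀^R r^n V(0,r) dr = H₀. In other words, such a solution blows up on or before the finite time T = 2R^{n+2}/(n(n+1)H₀). -/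

import Mathlib

open MeasureTheory intervalIntegral Set Topology Filter

/-- The constant `α(N)`: `α(1) = 1`, `α(2) = 2π`, and
`α(N) = N(N−2)·π^{N/2}/Γ(N/2+1)` for `N ≥ 3`. -/
noncomputable def alphaConst (N : ℕ) : ℝ :=
  if N = 1 then 1
  else if N = 2 then 2 * Real.pi
  else (N : ℝ) * ((N : ℝ) - 2) * Real.pi ^ ((N : ℝ) / 2) / Real.Gamma ((N : ℝ) / 2 + 1)

lemma alphaConst_nonneg (N : ℕ) (hN : 1 ≤ N) : 0 ≤ alphaConst N := by
  unfold alphaConst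
  split_ifs with h1 h2
  · norm_num
  · positivity
  · have hN3 : 3 ≤ N := by omega
    have h2 : (2:ℝ) ≤ (N:ℝ) := by exact_mod_cast by omega
    have hg : 0 < Real.Gamma ((N:ℝ)/2 + 1) := Real.Gamma_pos_of_pos (by positivity)
    have hp : (0:ℝ) < Real.pi ^ ((N:ℝ)/2) := Real.rpow_pos_of_pos Real.pi_pos _
    have : 0 ≤ (N:ℝ) * ((N:ℝ) - 2) := by nlinarith
    positivity

lemma cs_interval {a b : ℝ} (hab : a ≤ b) {f g : ℝ → ℝ}
    (hf : ContinuousOn f (Set.Icc a b)) (hg : ContinuousOn g (Set.Icc a b))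
    (hA : 0 < ∫ x in a..b, f x ^ 2) :
    (∫ x in a..b, f x * g x) ^ 2 ≤ (∫ x in a..b, f x ^ 2) * ∫ x in a..b, g x ^ 2 := by
  have huIcc : Set.uIcc a b = Set.Icc a b := Set.uIcc_of_le hab
  have hif : IntervalIntegrable (fun x => f x ^ 2) volume a b :=
    ((hf.pow 2).mono huIcc.subset).intervalIntegrable
  have hig : IntervalIntegrable (fun x => g x ^ 2) volume a b :=
    ((hg.pow 2).mono huIcc.subset).intervalIntegrable
  have hifg : IntervalIntegrable (fun x => f x * g x) volume a b :=
    ((hf.mul hg).mono huIcc.subset).intervalIntegrable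
  set A := ∫ x in a..b, f x ^ 2 with hAdef
  set B := ∫ x in a..b, f x * g x with hBdef
  set C := ∫ x in a..b, g x ^ 2 with hCdef
  set lam := B / A with hlam
  have key : 0 ≤ ∫ x in a..b, (g x - lam * f x) ^ 2 :=
    intervalIntegral.integral_nonneg hab (fun u _ => sq_nonneg _)
  have expand : (∫ x in a..b, (g x - lam * f x) ^ 2) = C - 2 * lam * B + lam ^ 2 * A := by
    have heq : Set.EqOn (fun x => (g x - lam * f x) ^ 2)
        (fun x => (g x ^ 2 - 2 * lam * (f x * g x)) + lam ^ 2 * f x ^ 2) (Set.uIcc a b) :=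
      fun x _ => by ring
    rw [intervalIntegral.integral_congr heq,
      intervalIntegral.integral_add (hig.sub (hifg.const_mul _)) (hif.const_mul _),
      intervalIntegral.integral_sub hig (hifg.const_mul _),
      intervalIntegral.integral_const_mul, intervalIntegral.integral_const_mul]
  have hA0 : A ≠ 0 := ne_of_gt hA
  have h2 : 0 ≤ C - B ^ 2 / A := by
    have : C - 2 * lam * B + lam ^ 2 * A = C - B ^ 2 / A := by
      rw [hlam]; field_simp; ring
    rw [expand, this] at key; exact key
  have : B ^ 2 / A ≤ C := by linarith
  calc B ^ 2 = B ^ 2 / A * A := by field_simp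
  _ ≤ C * A := mul_le_mul_of_nonneg_right this hA.le
  _ = A * C := mul_comm _ _

set_option maxHeartbeats 2000000 in
/-- Blowup on or before `T = 2R^{n+2}/(n(n+1)H₀)` for the `C¹` solutions of the
`N`-dimensional pressureless Euler–Poisson equations with repulsive forces (`δ = 1`),
in radial symmetry, with compact support in `[0,R]` and initial functional
`H₀ = ∫₀^R rⁿ V₀ dr > 0`: no such solution exists on all of `[0,T]`. -/
theorem blowup_eulerPoisson_repulsive_pressureless
    (N : ℕ) (hN : 1 ≤ N) (n R H₀ T : ℝ)
    (hn : 0 < n) (hR : 0 < R) (hH₀ : 0 < H₀)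
    (hT : T = 2 * R ^ (n + 2) / (n * (n + 1) * H₀))
    (ρ V : ℝ → ℝ → ℝ)
    (hρC1 : ContDiffOn ℝ 1 (Function.uncurry ρ) (Set.Icc 0 T ×ˢ Set.Ici 0))
    (hVC1 : ContDiffOn ℝ 1 (Function.uncurry V) (Set.Icc 0 T ×ˢ Set.Ici 0))
    (hρnn : ∀ t r, 0 ≤ ρ t r)
    (hsupp : ∀ t r, R ≤ r → ρ t r = 0 ∧ V t r = 0)
    (hmom : ∀ t ∈ Set.Icc (0:ℝ) T, ∀ r ∈ Set.Ioo (0:ℝ) R,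
      deriv (fun τ => V τ r) t + V t r * deriv (fun s => V t s) r
      = alphaConst N * r ^ ((1:ℝ) - N) * ∫ s in (0:ℝ)..r, ρ t s * s ^ (N - 1))
    (hH0 : (∫ r in (0:ℝ)..R, r ^ n * V 0 r) = H₀) :
    False := by
  classical
  have hRpow : (0:ℝ) < R ^ (n + 2) := Real.rpow_pos_of_pos hR _
  have hT0 : 0 < T := by rw [hT]; positivity
  set D : Set (ℝ × ℝ) := Set.Icc (0:ℝ) T ×ˢ Set.Ici (0:ℝ) with hDdef
  have hUD : UniqueDiffOn ℝ D := (uniqueDiffOn_Icc hT0).prod (uniqueDiffOn_Ici 0)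
  set W : ℝ × ℝ → ℝ × ℝ →L[ℝ] ℝ := fderivWithin ℝ (Function.uncurry V) D with hWdef
  have hWcont : ContinuousOn W D := hVC1.continuousOn_fderivWithin hUD le_rfl
  have hVcont : ContinuousOn (Function.uncurry V) D := hVC1.continuousOn
  have hmemD : ∀ {t r : ℝ}, t ∈ Set.Icc (0:ℝ) T → 0 ≤ r → ((t, r) ∈ D) :=
    fun ht hr => Set.mk_mem_prod ht hr
  have hDnhds : ∀ {t r : ℝ}, t ∈ Set.Ioo (0:ℝ) T → 0 < r → D ∈ 𝓝 (t, r) := by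
    intro t r ht hr
    have hsub : Set.Ioo (0:ℝ) T ×ˢ Set.Ioi (0:ℝ) ⊆ D :=
      Set.prod_mono Set.Ioo_subset_Icc_self Set.Ioi_subset_Ici_self
    exact Filter.mem_of_superset
      ((isOpen_Ioo.prod isOpen_Ioi).mem_nhds (Set.mk_mem_prod ht hr)) hsub
  have hFD : ∀ {t r : ℝ}, t ∈ Set.Ioo (0:ℝ) T → 0 < r →
      HasFDerivAt (Function.uncurry V) (W (t, r)) (t, r) := by
    intro t r ht hr
    have hnb := hDnhds ht hr
    have hdiff : DifferentiableAt ℝ (Function.uncurry V) (t, r) :=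
      ((hVC1.differentiableOn one_ne_zero) (t, r) (mem_of_mem_nhds hnb)).differentiableAt hnb
    have : W (t, r) = fderiv ℝ (Function.uncurry V) (t, r) := fderivWithin_of_mem_nhds hnb
    rw [this]; exact hdiff.hasFDerivAt
  have hVtD : ∀ {t r : ℝ}, t ∈ Set.Ioo (0:ℝ) T → 0 < r →
      HasDerivAt (fun τ => V τ r) (W (t, r) ((1:ℝ), (0:ℝ))) t := by
    intro t r ht hr
    have h1 : HasDerivAt (fun τ : ℝ => (τ, r)) ((1:ℝ), (0:ℝ)) t :=
      (hasDerivAt_id t).prodMk (hasDerivAt_const t r)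
    exact (hFD ht hr).comp_hasDerivAt t h1
  have hVrD : ∀ {t r : ℝ}, t ∈ Set.Ioo (0:ℝ) T → 0 < r →
      HasDerivAt (fun s => V t s) (W (t, r) ((0:ℝ), (1:ℝ))) r := by
    intro t r ht hr
    have h1 : HasDerivAt (fun s : ℝ => (t, s)) ((0:ℝ), (1:ℝ)) r :=
      (hasDerivAt_const r t).prodMk (hasDerivAt_id r)
    exact (hFD ht hr).comp_hasDerivAt r h1
  -- compactness bounds
  have hK : IsCompact (Set.Icc (0:ℝ) T ×ˢ Set.Icc (0:ℝ) R) := isCompact_Icc.prod isCompact_Icc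
  have hKD : Set.Icc (0:ℝ) T ×ˢ Set.Icc (0:ℝ) R ⊆ D :=
    Set.prod_mono (subset_refl _) Set.Icc_subset_Ici_self
  obtain ⟨M, hM⟩ := hK.exists_bound_of_continuousOn (hWcont.mono hKD)
  obtain ⟨MV, hMV⟩ := hK.exists_bound_of_continuousOn (hVcont.mono hKD)
  have hMV0 : 0 ≤ MV :=
    le_trans (norm_nonneg _) (hMV (0, 0) ⟨⟨le_rfl, hT0.le⟩, le_rfl, hR.le⟩)
  have hM0 : 0 ≤ M :=
    le_trans (norm_nonneg _) (hM (0, 0) ⟨⟨le_rfl, hT0.le⟩, le_rfl, hR.le⟩)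
  have hVbd : ∀ {t r : ℝ}, t ∈ Set.Icc (0:ℝ) T → r ∈ Set.Icc (0:ℝ) R → |V t r| ≤ MV := by
    intro t r ht hr
    have := hMV (t, r) (Set.mk_mem_prod ht hr)
    rwa [Function.uncurry, Real.norm_eq_abs] at this
  have hone : ‖((1:ℝ), (0:ℝ))‖ = 1 := by simp [Prod.norm_def]
  have hVtbd : ∀ {t r : ℝ}, t ∈ Set.Icc (0:ℝ) T → r ∈ Set.Icc (0:ℝ) R →
      |W (t, r) ((1:ℝ), (0:ℝ))| ≤ M := by
    intro t r ht hr
    calc |W (t, r) ((1:ℝ), (0:ℝ))| = ‖W (t, r) ((1:ℝ), (0:ℝ))‖ := (Real.norm_eq_abs _).symm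
    _ ≤ ‖W (t, r)‖ * ‖((1:ℝ), (0:ℝ))‖ := (W (t, r)).le_opNorm _
    _ = ‖W (t, r)‖ := by rw [hone, mul_one]
    _ ≤ M := hM (t, r) (Set.mk_mem_prod ht hr)
  -- choice of ε
  set e0 : ℝ := (H₀ * (n + 1) / (2 * (MV + 1) * (n + 2))) ^ (1 / (n + 1)) with he0def
  have he0pos : 0 < e0 := Real.rpow_pos_of_pos (by positivity) _
  set ε : ℝ := min (R / 2) e0 with hεdef
  have hε0 : 0 < ε := lt_min (by positivity) he0pos
  have hεR : ε < R := lt_of_le_of_lt (min_le_left _ _) (by linarith)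
  have hεpow : ε ^ (n + 1) ≤ H₀ * (n + 1) / (2 * (MV + 1) * (n + 2)) := by
    have h1 : ε ^ (n + 1) ≤ e0 ^ (n + 1) :=
      Real.rpow_le_rpow hε0.le (min_le_right _ _) (by positivity)
    have h2 : e0 ^ (n + 1) = H₀ * (n + 1) / (2 * (MV + 1) * (n + 2)) := by
      rw [he0def, ← Real.rpow_mul (by positivity), one_div,
        inv_mul_cancel₀ (by positivity : (n:ℝ) + 1 ≠ 0), Real.rpow_one]
    rw [h2] at h1; exact h1
  -- continuity helpers
  have hIεR : Set.Icc ε R ⊆ Set.Icc (0:ℝ) R := Set.Icc_subset_Icc hε0.le le_rfl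
  have huIcc : Set.uIcc ε R = Set.Icc ε R := Set.uIcc_of_le hεR.le
  have huIoc : Set.uIoc ε R = Set.Ioc ε R := Set.uIoc_of_le hεR.le
  have hrpowC : ∀ p : ℝ, ContinuousOn (fun r : ℝ => r ^ p) (Set.Icc ε R) := by
    intro p x hx
    exact (Real.continuousAt_rpow_const x p
      (Or.inl (ne_of_gt (lt_of_lt_of_le hε0 hx.1)))).continuousWithinAt
  have hVslice : ∀ t ∈ Set.Icc (0:ℝ) T, ContinuousOn (fun r => V t r) (Set.Icc (0:ℝ) R) := by
    intro t ht
    exact hVcont.comp ((continuous_const.prodMk continuous_id).continuousOn)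
      (fun r hr => hmemD ht hr.1)
  have hWslice : ∀ t ∈ Set.Icc (0:ℝ) T, ∀ v : ℝ × ℝ,
      ContinuousOn (fun r => W (t, r) v) (Set.Icc (0:ℝ) R) := by
    intro t ht v
    exact (hWcont.comp ((continuous_const.prodMk continuous_id).continuousOn)
      (fun r hr => hmemD ht hr.1)).clm_apply continuousOn_const
  have hρslice : ∀ t ∈ Set.Icc (0:ℝ) T, ContinuousOn (fun s => ρ t s) (Set.Icc (0:ℝ) R) := by
    intro t ht
    exact hρC1.continuousOn.comp ((continuous_const.prodMk continuous_id).continuousOn)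
      (fun r hr => hmemD ht hr.1)
  -- main objects
  set Hf : ℝ → ℝ := fun t => ∫ r in ε..R, r ^ n * V t r with hHfdef
  set DD : ℝ → ℝ := fun t => ∫ r in ε..R, r ^ n * W (t, r) ((1:ℝ), (0:ℝ)) with hDDdef
  set c : ℝ := n * (n + 2) / (2 * R ^ (n + 2)) with hcdef
  have hc0 : 0 < c := by rw [hcdef]; positivity
  -- derivative of Hf
  have hasDeriv : ∀ t ∈ Set.Ioo (0:ℝ) T, HasDerivAt Hf (DD t) t := by
    intro t ht
    set δ : ℝ := min t (T - t) with hδdef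
    have hδ0 : 0 < δ := lt_min ht.1 (by linarith [ht.2])
    have hball : Metric.ball t δ ⊆ Set.Ioo (0:ℝ) T := by
      intro x hx
      rw [Real.ball_eq_Ioo] at hx
      have h1 := min_le_left t (T - t)
      have h2 := min_le_right t (T - t)
      exact ⟨by linarith [hx.1], by linarith [hx.2]⟩
    have hball_mem : Metric.ball t δ ∈ 𝓝 t := Metric.ball_mem_nhds t hδ0
    have h1 : ∀ᶠ x in 𝓝 t, AEStronglyMeasurable (fun r => r ^ n * V x r)
        (volume.restrict (Set.uIoc ε R)) := by
      filter_upwards [hball_mem] with x hx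
      refine ContinuousOn.aestronglyMeasurable ?_ measurableSet_uIoc
      have hsub : Set.uIoc ε R ⊆ Set.Icc ε R := by
        rw [huIoc]; exact Set.Ioc_subset_Icc_self
      exact (((hrpowC n).mul ((hVslice x
        (Set.Ioo_subset_Icc_self (hball hx))).mono hIεR))).mono hsub
    have hcont_tV : ContinuousOn (fun r => r ^ n * V t r) (Set.Icc ε R) :=
      (hrpowC n).mul ((hVslice t (Set.Ioo_subset_Icc_self ht)).mono hIεR)
    have h2 : IntervalIntegrable (fun r => r ^ n * V t r) volume ε R :=
      (hcont_tV.mono huIcc.subset).intervalIntegrable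
    have h3 : AEStronglyMeasurable (fun r => r ^ n * W (t, r) ((1:ℝ), (0:ℝ)))
        (volume.restrict (Set.uIoc ε R)) := by
      refine ContinuousOn.aestronglyMeasurable ?_ measurableSet_uIoc
      have hsub : Set.uIoc ε R ⊆ Set.Icc ε R := by
        rw [huIoc]; exact Set.Ioc_subset_Icc_self
      exact ((hrpowC n).mul ((hWslice t (Set.Ioo_subset_Icc_self ht) _).mono hIεR)).mono hsub
    have h4 : ∀ᵐ r ∂(volume : Measure ℝ), r ∈ Set.uIoc ε R → ∀ x ∈ Metric.ball t δ,
        ‖r ^ n * W (x, r) ((1:ℝ), (0:ℝ))‖ ≤ R ^ n * M := by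
      refine Filter.Eventually.of_forall (fun r hr x hx => ?_)
      have hr' : r ∈ Set.Ioc ε R := by rwa [huIoc] at hr
      have hr0 : 0 < r := lt_trans hε0 hr'.1
      have hb1 : r ^ n ≤ R ^ n := Real.rpow_le_rpow hr0.le hr'.2 hn.le
      have hb2 : |W (x, r) ((1:ℝ), (0:ℝ))| ≤ M :=
        hVtbd (Set.Ioo_subset_Icc_self (hball hx)) ⟨hr0.le, hr'.2⟩
      rw [Real.norm_eq_abs, abs_mul, abs_of_nonneg (Real.rpow_nonneg hr0.le n)]
      exact mul_le_mul hb1 hb2 (abs_nonneg _) (Real.rpow_nonneg hR.le n)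
    have h5 : IntervalIntegrable (fun _ : ℝ => R ^ n * M) volume ε R :=
      intervalIntegrable_const
    have h6 : ∀ᵐ r ∂(volume : Measure ℝ), r ∈ Set.uIoc ε R → ∀ x ∈ Metric.ball t δ,
        HasDerivAt (fun x => r ^ n * V x r) (r ^ n * W (x, r) ((1:ℝ), (0:ℝ))) x := by
      refine Filter.Eventually.of_forall (fun r hr x hx => ?_)
      have hr' : r ∈ Set.Ioc ε R := by rwa [huIoc] at hr
      have hr0 : 0 < r := lt_trans hε0 hr'.1
      exact (hVtD (hball hx) hr0).const_mul (r ^ n)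
    obtain ⟨-, hder⟩ := intervalIntegral.hasDerivAt_integral_of_dominated_loc_of_deriv_le
      hball_mem h1 h2 h3 h4 h5 h6
    exact hder
  -- lower bound on DD
  have hDDge : ∀ t ∈ Set.Ioo (0:ℝ) T, c * Hf t ^ 2 ≤ DD t := by
    intro t ht
    have htIcc : t ∈ Set.Icc (0:ℝ) T := Set.Ioo_subset_Icc_self ht
    have hVC : ContinuousOn (fun r => V t r) (Set.Icc ε R) := (hVslice t htIcc).mono hIεR
    have hVrC : ContinuousOn (fun r => W (t, r) ((0:ℝ), (1:ℝ))) (Set.Icc ε R) :=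
      (hWslice t htIcc _).mono hIεR
    -- continuity of the force term
    have hPC : ContinuousOn (fun r => ∫ s in (0:ℝ)..r, ρ t s * s ^ (N - 1)) (Set.Icc ε R) := by
      have h0R : Set.uIcc (0:ℝ) R = Set.Icc (0:ℝ) R := Set.uIcc_of_le hR.le
      have hint : IntegrableOn (fun s => ρ t s * s ^ (N - 1)) (Set.uIcc (0:ℝ) R) volume := by
        rw [h0R]
        exact ((hρslice t htIcc).mul (continuous_pow _).continuousOn).integrableOn_compact
          isCompact_Icc
      have := intervalIntegral.continuousOn_primitive_interval hint
      rw [h0R] at this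
      exact this.mono hIεR
    have hFFC : ContinuousOn
        (fun r => alphaConst N * r ^ ((1:ℝ) - (N:ℝ)) * ∫ s in (0:ℝ)..r, ρ t s * s ^ (N - 1))
        (Set.Icc ε R) := (continuousOn_const.mul (hrpowC _)).mul hPC
    have hFFnn : ∀ r ∈ Set.Icc ε R,
        0 ≤ alphaConst N * r ^ ((1:ℝ) - (N:ℝ)) * ∫ s in (0:ℝ)..r, ρ t s * s ^ (N - 1) := by
      intro r hr
      have hr0 : 0 < r := lt_of_lt_of_le hε0 hr.1
      have hPnn : 0 ≤ ∫ s in (0:ℝ)..r, ρ t s * s ^ (N - 1) :=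
        intervalIntegral.integral_nonneg hr0.le
          (fun s hs => mul_nonneg (hρnn t s) (pow_nonneg hs.1 _))
      exact mul_nonneg (mul_nonneg (alphaConst_nonneg N hN) (Real.rpow_nonneg hr0.le _)) hPnn
    -- rewrite DD t using the momentum equation
    have hne : ∀ᵐ r ∂(volume : Measure ℝ), r ≠ R := by
      rw [MeasureTheory.ae_iff]
      simp only [ne_eq, not_not, Set.setOf_eq_eq_singleton]
      exact measure_singleton R
    have hcongr : DD t = ∫ r in ε..R,
        (r ^ n * (-(V t r * W (t, r) ((0:ℝ), (1:ℝ))))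
          + r ^ n * (alphaConst N * r ^ ((1:ℝ) - (N:ℝ)) * ∫ s in (0:ℝ)..r, ρ t s * s ^ (N - 1))) := by
      apply intervalIntegral.integral_congr_ae
      filter_upwards [hne] with r hrne hr
      have hr' : r ∈ Set.Ioc ε R := by rwa [huIoc] at hr
      have hrR : r < R := lt_of_le_of_ne hr'.2 hrne
      have hr0 : 0 < r := lt_trans hε0 hr'.1
      have hmom' := hmom t htIcc r ⟨hr0, hrR⟩
      have e1 : deriv (fun τ => V τ r) t = W (t, r) ((1:ℝ), (0:ℝ)) := (hVtD ht hr0).deriv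
      have e2 : deriv (fun s => V t s) r = W (t, r) ((0:ℝ), (1:ℝ)) := (hVrD ht hr0).deriv
      rw [e1, e2] at hmom'
      linear_combination (r ^ n) * hmom'
    have hf1C : ContinuousOn (fun r => r ^ n * (-(V t r * W (t, r) ((0:ℝ), (1:ℝ)))))
        (Set.Icc ε R) := (hrpowC n).mul (hVC.mul hVrC).neg
    have hf2C : ContinuousOn (fun r => r ^ n *
        (alphaConst N * r ^ ((1:ℝ) - (N:ℝ)) * ∫ s in (0:ℝ)..r, ρ t s * s ^ (N - 1)))
        (Set.Icc ε R) := (hrpowC n).mul hFFC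
    have hi1 : IntervalIntegrable (fun r => r ^ n * (-(V t r * W (t, r) ((0:ℝ), (1:ℝ)))))
        volume ε R := (hf1C.mono huIcc.subset).intervalIntegrable
    have hi2 : IntervalIntegrable (fun r => r ^ n *
        (alphaConst N * r ^ ((1:ℝ) - (N:ℝ)) * ∫ s in (0:ℝ)..r, ρ t s * s ^ (N - 1)))
        volume ε R := (hf2C.mono huIcc.subset).intervalIntegrable
    have hsplit : DD t = (∫ r in ε..R, r ^ n * (-(V t r * W (t, r) ((0:ℝ), (1:ℝ)))))
        + ∫ r in ε..R, r ^ n *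
          (alphaConst N * r ^ ((1:ℝ) - (N:ℝ)) * ∫ s in (0:ℝ)..r, ρ t s * s ^ (N - 1)) := by
      rw [hcongr, intervalIntegral.integral_add hi1 hi2]
    have hA2nn : 0 ≤ ∫ r in ε..R, r ^ n *
        (alphaConst N * r ^ ((1:ℝ) - (N:ℝ)) * ∫ s in (0:ℝ)..r, ρ t s * s ^ (N - 1)) :=
      intervalIntegral.integral_nonneg hεR.le (fun r hr =>
        mul_nonneg (Real.rpow_nonneg (le_trans hε0.le hr.1) n) (hFFnn r hr))
    -- integration by parts
    have hderivg : ∀ r ∈ Set.uIcc ε R, HasDerivAt (fun r => r ^ n * (V t r) ^ 2)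
        (n * (r ^ (n - 1) * (V t r) ^ 2)
          + (-2) * (r ^ n * (-(V t r * W (t, r) ((0:ℝ), (1:ℝ)))))) r := by
      intro r hr
      rw [huIcc] at hr
      have hr0 : 0 < r := lt_of_lt_of_le hε0 hr.1
      have h1 : HasDerivAt (fun r : ℝ => r ^ n) (n * r ^ (n - 1)) r :=
        Real.hasDerivAt_rpow_const (Or.inl hr0.ne')
      have h2 : HasDerivAt (fun r => (V t r) ^ 2)
          (2 * V t r * W (t, r) ((0:ℝ), (1:ℝ))) r := by
        have := (hVrD ht hr0).pow 2
        norm_num at this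
        exact this
      have h3 := h1.mul h2
      have heq : (n * (r ^ (n - 1) * (V t r) ^ 2)
          + (-2) * (r ^ n * (-(V t r * W (t, r) ((0:ℝ), (1:ℝ))))))
          = n * r ^ (n - 1) * (V t r) ^ 2 + r ^ n * (2 * V t r * W (t, r) ((0:ℝ), (1:ℝ))) := by
        ring
      rw [heq]
      exact h3
    have hiq1 : IntervalIntegrable (fun r => n * (r ^ (n - 1) * (V t r) ^ 2)) volume ε R :=
      (((continuousOn_const.mul ((hrpowC (n - 1)).mul (hVC.pow 2)))).mono
        huIcc.subset).intervalIntegrable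
    have hiq2 : IntervalIntegrable
        (fun r => (-2) * (r ^ n * (-(V t r * W (t, r) ((0:ℝ), (1:ℝ)))))) volume ε R :=
      hi1.const_mul _
    have hFTC : (∫ r in ε..R, (n * (r ^ (n - 1) * (V t r) ^ 2)
        + (-2) * (r ^ n * (-(V t r * W (t, r) ((0:ℝ), (1:ℝ)))))))
        = R ^ n * (V t R) ^ 2 - ε ^ n * (V t ε) ^ 2 :=
      intervalIntegral.integral_eq_sub_of_hasDerivAt hderivg (hiq1.add hiq2)
    rw [intervalIntegral.integral_add hiq1 hiq2, intervalIntegral.integral_const_mul,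
      intervalIntegral.integral_const_mul, (hsupp t R le_rfl).2] at hFTC
    have hgε : 0 ≤ ε ^ n * (V t ε) ^ 2 :=
      mul_nonneg (Real.rpow_nonneg hε0.le n) (sq_nonneg _)
    have hIBP : (n / 2) * ∫ r in ε..R, r ^ (n - 1) * (V t r) ^ 2
        ≤ ∫ r in ε..R, r ^ n * (-(V t r * W (t, r) ((0:ℝ), (1:ℝ)))) := by
      nlinarith [hFTC, hgε]
    -- Cauchy-Schwarz
    have hf1 : ContinuousOn (fun r : ℝ => r ^ ((n + 1) / 2)) (Set.Icc ε R) := hrpowC _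
    have hf2 : ContinuousOn (fun r => r ^ ((n - 1) / 2) * V t r) (Set.Icc ε R) :=
      (hrpowC _).mul hVC
    have hsq1 : Set.EqOn (fun r : ℝ => (fun r : ℝ => r ^ ((n + 1) / 2)) r ^ 2)
        (fun r : ℝ => r ^ (n + 1)) (Set.uIcc ε R) := by
      intro r hr
      rw [huIcc] at hr
      have hr0 : 0 < r := lt_of_lt_of_le hε0 hr.1
      dsimp only
      rw [← Real.rpow_natCast (r ^ ((n + 1) / 2)) 2, ← Real.rpow_mul hr0.le,
        show (n + 1) / 2 * ((2:ℕ):ℝ) = n + 1 by push_cast; ring]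
    have hsq2 : Set.EqOn (fun r : ℝ => (fun r => r ^ ((n - 1) / 2) * V t r) r ^ 2)
        (fun r : ℝ => r ^ (n - 1) * (V t r) ^ 2) (Set.uIcc ε R) := by
      intro r hr
      rw [huIcc] at hr
      have hr0 : 0 < r := lt_of_lt_of_le hε0 hr.1
      dsimp only
      rw [mul_pow, ← Real.rpow_natCast (r ^ ((n - 1) / 2)) 2, ← Real.rpow_mul hr0.le,
        show (n - 1) / 2 * ((2:ℕ):ℝ) = n - 1 by push_cast; ring]
    have hprod : Set.EqOn (fun r : ℝ => (fun r : ℝ => r ^ ((n + 1) / 2)) r *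
        (fun r => r ^ ((n - 1) / 2) * V t r) r)
        (fun r : ℝ => r ^ n * V t r) (Set.uIcc ε R) := by
      intro r hr
      rw [huIcc] at hr
      have hr0 : 0 < r := lt_of_lt_of_le hε0 hr.1
      dsimp only
      rw [← mul_assoc, ← Real.rpow_add hr0, show (n + 1) / 2 + (n - 1) / 2 = n by ring]
    have hεp2 : ε ^ (n + 2) < R ^ (n + 2) :=
      Real.rpow_lt_rpow hε0.le hεR (by positivity)
    have hεp2' : 0 ≤ ε ^ (n + 2) := Real.rpow_nonneg hε0.le _
    have hA'eq : (∫ r in ε..R, r ^ (n + 1)) = (R ^ (n + 2) - ε ^ (n + 2)) / (n + 2) := by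
      rw [integral_rpow (Or.inl (by linarith : (-1:ℝ) < n + 1)),
        show n + 1 + 1 = n + 2 by ring]
    have hApos : 0 < ∫ r in ε..R, (fun r : ℝ => r ^ ((n + 1) / 2)) r ^ 2 := by
      rw [intervalIntegral.integral_congr hsq1, hA'eq]
      exact div_pos (by linarith) (by linarith)
    have hCS := cs_interval hεR.le hf1 hf2 hApos
    rw [intervalIntegral.integral_congr hsq1, intervalIntegral.integral_congr hsq2,
      intervalIntegral.integral_congr hprod, hA'eq] at hCS
    -- hCS : (∫ r^n V)^2 ≤ (R^(n+2)-ε^(n+2))/(n+2) * ∫ r^(n-1) V^2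
    have hC2nn : 0 ≤ ∫ r in ε..R, r ^ (n - 1) * (V t r) ^ 2 :=
      intervalIntegral.integral_nonneg hεR.le (fun r hr =>
        mul_nonneg (Real.rpow_nonneg (le_trans hε0.le hr.1) _) (sq_nonneg _))
    have hHfeq : Hf t = ∫ r in ε..R, r ^ n * V t r := rfl
    have h1'' : (n + 2) * (Hf t) ^ 2 ≤ R ^ (n + 2) * ∫ r in ε..R, r ^ (n - 1) * (V t r) ^ 2 := by
      rw [hHfeq]
      have h := mul_le_mul_of_nonneg_left hCS (by linarith : (0:ℝ) ≤ n + 2)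
      have heq2 : (n + 2) * ((R ^ (n + 2) - ε ^ (n + 2)) / (n + 2)
          * ∫ r in ε..R, r ^ (n - 1) * (V t r) ^ 2)
          = (R ^ (n + 2) - ε ^ (n + 2)) * ∫ r in ε..R, r ^ (n - 1) * (V t r) ^ 2 := by
        field_simp
      rw [heq2] at h
      nlinarith [h, hC2nn, hεp2']
    -- combine
    have hfinal : c * Hf t ^ 2 ≤ (n / 2) * ∫ r in ε..R, r ^ (n - 1) * (V t r) ^ 2 := by
      rw [hcdef, div_mul_eq_mul_div, div_le_iff₀ (by positivity : (0:ℝ) < 2 * R ^ (n + 2))]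
      nlinarith [mul_le_mul_of_nonneg_left h1'' hn.le]
    calc c * Hf t ^ 2 ≤ (n / 2) * ∫ r in ε..R, r ^ (n - 1) * (V t r) ^ 2 := hfinal
    _ ≤ ∫ r in ε..R, r ^ n * (-(V t r * W (t, r) ((0:ℝ), (1:ℝ)))) := hIBP
    _ ≤ DD t := by rw [hsplit]; linarith [hA2nn]
  -- continuity of Hf on [0, T]
  have h0Icc : (0:ℝ) ∈ Set.Icc (0:ℝ) T := ⟨le_rfl, hT0.le⟩
  have hTIcc : T ∈ Set.Icc (0:ℝ) T := ⟨hT0.le, le_rfl⟩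
  have hHfcont : ContinuousOn Hf (Set.Icc (0:ℝ) T) := by
    intro t₀ ht₀
    apply intervalIntegral.continuousWithinAt_of_dominated_interval
      (bound := fun _ => R ^ n * MV)
    · filter_upwards [self_mem_nhdsWithin] with x hx
      refine ContinuousOn.aestronglyMeasurable ?_ measurableSet_uIoc
      exact ((hrpowC n).mul ((hVslice x hx).mono hIεR)).mono
        (by rw [huIoc]; exact Set.Ioc_subset_Icc_self)
    · filter_upwards [self_mem_nhdsWithin] with x hx
      refine Filter.Eventually.of_forall (fun r hr => ?_)
      have hr' : r ∈ Set.Ioc ε R := by rwa [huIoc] at hr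
      have hr0 : 0 < r := lt_trans hε0 hr'.1
      rw [Real.norm_eq_abs, abs_mul, abs_of_nonneg (Real.rpow_nonneg hr0.le n)]
      exact mul_le_mul (Real.rpow_le_rpow hr0.le hr'.2 hn.le) (hVbd hx ⟨hr0.le, hr'.2⟩)
        (abs_nonneg _) (Real.rpow_nonneg hR.le n)
    · exact intervalIntegrable_const
    · refine Filter.Eventually.of_forall (fun r hr => ?_)
      have hr' : r ∈ Set.Ioc ε R := by rwa [huIoc] at hr
      have hr0 : 0 < r := lt_trans hε0 hr'.1
      have hcV : ContinuousOn (fun x => V x r) (Set.Icc (0:ℝ) T) :=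
        hVcont.comp ((continuous_id.prodMk continuous_const).continuousOn)
          (fun x hx => hmemD hx hr0.le)
      exact continuousWithinAt_const.mul (hcV t₀ ht₀)
  have hIntIcc : interior (Set.Icc (0:ℝ) T) = Set.Ioo 0 T := interior_Icc
  have hmono : MonotoneOn Hf (Set.Icc (0:ℝ) T) := by
    apply monotoneOn_of_hasDerivWithinAt_nonneg (convex_Icc _ _) hHfcont (f' := DD)
    · intro x hx; rw [hIntIcc] at hx
      exact (hasDeriv x hx).hasDerivWithinAt
    · intro x hx; rw [hIntIcc] at hx
      exact le_trans (mul_nonneg hc0.le (sq_nonneg _)) (hDDge x hx)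
  -- initial value estimate
  have hV0C : ContinuousOn (fun r => r ^ n * V 0 r) (Set.Icc (0:ℝ) R) :=
    (Real.continuous_rpow_const hn.le).continuousOn.mul (hVslice 0 h0Icc)
  have hII0ε : IntervalIntegrable (fun r => r ^ n * V 0 r) volume 0 ε :=
    ((hV0C.mono (by rw [Set.uIcc_of_le hε0.le]; exact Set.Icc_subset_Icc le_rfl hεR.le))).intervalIntegrable
  have hIIεR : IntervalIntegrable (fun r => r ^ n * V 0 r) volume ε R :=
    ((hV0C.mono (by rw [huIcc]; exact hIεR))).intervalIntegrable
  have hadd := intervalIntegral.integral_add_adjacent_intervals hII0ε hIIεR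
  rw [hH0] at hadd
  have hHf0eq : Hf 0 = H₀ - ∫ r in (0:ℝ)..ε, r ^ n * V 0 r := by
    have hrfl : Hf 0 = ∫ r in ε..R, r ^ n * V 0 r := rfl
    linarith [hadd]
  have hidr : (∫ r in (0:ℝ)..ε, MV * r ^ n) = MV * (ε ^ (n + 1) / (n + 1)) := by
    rw [intervalIntegral.integral_const_mul, integral_rpow (Or.inl (by linarith : (-1:ℝ) < n)),
      Real.zero_rpow (by linarith : n + 1 ≠ 0)]
    ring
  have hsmall : |∫ r in (0:ℝ)..ε, r ^ n * V 0 r| ≤ MV * (ε ^ (n + 1) / (n + 1)) := by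
    have habs : |∫ r in (0:ℝ)..ε, MV * r ^ n| = MV * (ε ^ (n + 1) / (n + 1)) := by
      rw [hidr]; exact abs_of_nonneg (mul_nonneg hMV0 (by positivity))
    rw [← Real.norm_eq_abs, ← habs]
    apply intervalIntegral.norm_integral_le_abs_of_norm_le
    · refine (ae_restrict_iff' measurableSet_uIoc).mpr
        (Filter.Eventually.of_forall (fun r hr => ?_))
      have hr' : r ∈ Set.Ioc 0 ε := by rwa [Set.uIoc_of_le hε0.le] at hr
      rw [Real.norm_eq_abs, abs_mul, abs_of_nonneg (Real.rpow_nonneg hr'.1.le n)]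
      have hvb : |V 0 r| ≤ MV := hVbd h0Icc ⟨hr'.1.le, le_trans hr'.2 hεR.le⟩
      calc r ^ n * |V 0 r| ≤ r ^ n * MV :=
            mul_le_mul_of_nonneg_left hvb (Real.rpow_nonneg hr'.1.le n)
      _ = MV * r ^ n := mul_comm _ _
    · exact (continuous_const.mul (Real.continuous_rpow_const hn.le)).intervalIntegrable _ _
  have hEbound : MV * (ε ^ (n + 1) / (n + 1)) < H₀ / (n + 2) := by
    have hq' : ε ^ (n + 1) * (2 * (MV + 1) * (n + 2)) ≤ H₀ * (n + 1) :=
      (le_div_iff₀ (by positivity)).mp hεpow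
    have hqnn : 0 ≤ ε ^ (n + 1) := Real.rpow_nonneg hε0.le _
    rw [show MV * (ε ^ (n + 1) / (n + 1)) = MV * ε ^ (n + 1) / (n + 1) by ring,
      div_lt_div_iff₀ (by linarith) (by linarith)]
    nlinarith [mul_nonneg hqnn (by linarith : (0:ℝ) ≤ n + 2), hH₀, hn]
  have hHf0gt : (n + 1) * H₀ / (n + 2) < Hf 0 := by
    have hid : (n + 1) * H₀ / (n + 2) = H₀ - H₀ / (n + 2) := by field_simp; ring
    have hEle : (∫ r in (0:ℝ)..ε, r ^ n * V 0 r) < H₀ / (n + 2) :=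
      lt_of_le_of_lt (le_trans (le_abs_self _) hsmall) hEbound
    rw [hHf0eq, hid]; linarith
  have hHf0pos : 0 < Hf 0 := lt_trans (by positivity) hHf0gt
  have hHfpos : ∀ t ∈ Set.Icc (0:ℝ) T, 0 < Hf t := fun t ht =>
    lt_of_lt_of_le hHf0pos (hmono h0Icc ht ht.1)
  -- the Riccati comparison
  set G : ℝ → ℝ := fun t => -(Hf t)⁻¹ - c * t with hGdef
  have hGcont : ContinuousOn G (Set.Icc (0:ℝ) T) :=
    ((hHfcont.inv₀ (fun t ht => (hHfpos t ht).ne')).neg).sub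
      ((continuous_const.mul continuous_id).continuousOn)
  have hGmono : MonotoneOn G (Set.Icc (0:ℝ) T) := by
    apply monotoneOn_of_hasDerivWithinAt_nonneg (convex_Icc _ _) hGcont
      (f' := fun t => DD t / (Hf t) ^ 2 - c)
    · intro x hx; rw [hIntIcc] at hx
      have hp := hHfpos x (Set.Ioo_subset_Icc_self hx)
      have h1 : HasDerivAt (fun t => (Hf t)⁻¹) (-(DD x) / (Hf x) ^ 2) x :=
        (hasDeriv x hx).inv hp.ne'
      have h2 : HasDerivAt (fun t => -(Hf t)⁻¹) (DD x / Hf x ^ 2) x := by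
        have := h1.neg
        rw [neg_div] at this
        rw [neg_neg] at this; exact this
      have h3 : HasDerivAt (fun t : ℝ => c * t) c x := by
        simpa using (hasDerivAt_id x).const_mul c
      exact (h2.sub h3).hasDerivWithinAt
    · intro x hx; rw [hIntIcc] at hx
      have hp := hHfpos x (Set.Ioo_subset_Icc_self hx)
      have hd := hDDge x hx
      have h2 : c ≤ DD x / Hf x ^ 2 := (le_div_iff₀ (by positivity)).mpr (by linarith)
      linarith
  have hfin := hGmono h0Icc hTIcc hT0.le
  have hHfTpos : 0 < Hf T := hHfpos T hTIcc
  have hcT : c * T = (n + 2) / ((n + 1) * H₀) := by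
    rw [hcdef, hT]
    field_simp
  have hinvT : 0 < (Hf T)⁻¹ := inv_pos.mpr hHfTpos
  have hinv0 : (Hf 0)⁻¹ < c * T := by
    rw [hcT]
    have hb : (0:ℝ) < (n + 1) * H₀ / (n + 2) := by positivity
    have h := one_div_lt_one_div_of_lt hb hHf0gt
    rwa [one_div, one_div_div] at h
  have hG0T : -(Hf 0)⁻¹ - c * 0 ≤ -(Hf T)⁻¹ - c * T := hfin
  rw [mul_zero] at hG0T
  linarith
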